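/- Let u : ℤ₂ → ℤ₂ be a 1-Lipschitz transitive map and let g : ℤ₂ → ℤ₂ be a derivative of u modulo 4 with parameter K. Let v : ℤ₂ → ℤ₂ be an arbitrary 1-Lipschitz map, and define f : ℤ₂ → ℤ₂ by f(x) = u(x) + 4·v(x). Then g is a derivative of f modulo 4 with parameter K (so f is uniformly differentiable modulo 4), and f is transitive, i.e. transitive modulo 2^n for every n ≥ 1. -/

import Mathlib

open Function Finset

/-- `a ≡ b (mod 2^s)` in the 2-adic integers. -/
def CongMod (s : ℕ) (a b : ℤ_[2]) : Prop := ‖a - b‖ ≤ ((2 : ℝ) ^ s)⁻¹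

/-- `f` is 1-Lipschitz for the 2-adic norm (a T-function). -/
def OneLip (f : ℤ_[2] → ℤ_[2]) : Prop := ∀ a b : ℤ_[2], ‖f a - f b‖ ≤ ‖a - b‖

/-- `f` is transitive modulo `2^n`. -/
def TransMod (f : ℤ_[2] → ℤ_[2]) (n : ℕ) : Prop :=
  ∀ x y : ℤ_[2], ∃ i < 2 ^ n, CongMod n (f^[i] x) y

/-- `f` is transitive (single cycle modulo every power of 2). -/
def TransitiveT (f : ℤ_[2] → ℤ_[2]) : Prop := ∀ n : ℕ, 1 ≤ n → TransMod f n

/-- `f` is bijective modulo `2^n`. -/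
def BijMod (f : ℤ_[2] → ℤ_[2]) (n : ℕ) : Prop :=
  (∀ a b : ℤ_[2], CongMod n (f a) (f b) → CongMod n a b) ∧
  (∀ y : ℤ_[2], ∃ x : ℤ_[2], CongMod n (f x) y)

/-- `f` is bijective (measure-preserving T-function). -/
def BijectiveT (f : ℤ_[2] → ℤ_[2]) : Prop := ∀ n : ℕ, 1 ≤ n → BijMod f n

/-- `g` is a derivative of `f` modulo `2^M` with parameter `K`. -/
def IsDerivMod (f g : ℤ_[2] → ℤ_[2]) (M K : ℕ) : Prop :=
  ∀ x h : ℤ_[2], ‖h‖ ≤ ((2 : ℝ) ^ K)⁻¹ →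
    ‖f (x + h) - f x - g x * h‖ ≤ ((2 : ℝ) ^ M)⁻¹ * ‖h‖

/-- The `n`-th binary digit of a 2-adic integer, as an element of `ZMod 2`.
`PadicInt.appr x n` is the unique integer in `{0, …, 2^n - 1}` congruent to `x` mod `2^n`. -/
noncomputable def delta (n : ℕ) (x : ℤ_[2]) : ZMod 2 :=
  (((x.appr (n + 1) - x.appr n) / 2 ^ n : ℕ) : ZMod 2)

/- ### Auxiliary material -/

namespace PerturbAux

noncomputable abbrev phi (m : ℕ) : ℤ_[2] →+* ZMod (2^m) := PadicInt.toZModPow m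

lemma norm_le_iff_phi (m : ℕ) (a : ℤ_[2]) : ‖a‖ ≤ ((2:ℝ)^m)⁻¹ ↔ phi m a = 0 := by
  have h2 := PadicInt.norm_le_pow_iff_mem_span_pow a m (p := 2)
  rw [show (((2:ℕ)):ℝ)^(-(m:ℤ)) = ((2:ℝ)^m)⁻¹ by push_cast; rw [zpow_neg, zpow_natCast]] at h2
  rw [h2, ← PadicInt.ker_toZModPow, RingHom.mem_ker]

lemma cong_iff_phi (m : ℕ) (a b : ℤ_[2]) : CongMod m a b ↔ phi m a = phi m b := by
  rw [CongMod, norm_le_iff_phi, map_sub, sub_eq_zero]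

lemma phi_val (m : ℕ) (c : ZMod (2^m)) : phi m ((c.val : ℕ) : ℤ_[2]) = c := by
  rw [map_natCast, ZMod.natCast_zmod_val]

lemma norm_two_pow (n : ℕ) : ‖((2:ℤ_[2])^n)‖ = ((2:ℝ)^n)⁻¹ := by
  have := PadicInt.norm_p_pow (p := 2) n
  push_cast at this
  rw [this, zpow_neg, zpow_natCast]

lemma lip_phi {f : ℤ_[2] → ℤ_[2]} (hf : OneLip f) (m : ℕ) {a b : ℤ_[2]}
    (h : phi m a = phi m b) : phi m (f a) = phi m (f b) := by
  rw [← cong_iff_phi] at h ⊢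
  exact le_trans (hf a b) h

noncomputable def ind (f : ℤ_[2] → ℤ_[2]) (m : ℕ) : ZMod (2^m) → ZMod (2^m) :=
  fun c => phi m (f ((c.val : ℕ) : ℤ_[2]))

lemma ind_spec {f : ℤ_[2] → ℤ_[2]} (hf : OneLip f) (m : ℕ) (t : ℤ_[2]) :
    phi m (f t) = ind f m (phi m t) :=
  lip_phi hf m (phi_val m (phi m t)).symm

lemma ind_iter {f : ℤ_[2] → ℤ_[2]} (hf : OneLip f) (m : ℕ) (i : ℕ) (t : ℤ_[2]) :
    phi m (f^[i] t) = (ind f m)^[i] (phi m t) := by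
  induction i with
  | zero => rfl
  | succ k ih =>
      rw [Function.iterate_succ_apply', Function.iterate_succ_apply', ← ih, ind_spec hf]

lemma surj_orbit {f : ℤ_[2] → ℤ_[2]} {m : ℕ} (hf : OneLip f) (htr : TransMod f m)
    (c : ZMod (2^m)) : Function.Surjective fun i : Fin (2^m) => (ind f m)^[(i:ℕ)] c := by
  intro y
  obtain ⟨i, hi, hcong⟩ := htr ((c.val : ℕ) : ℤ_[2]) ((y.val : ℕ) : ℤ_[2])
  refine ⟨⟨i, hi⟩, ?_⟩
  rw [cong_iff_phi, phi_val, ind_iter hf, phi_val] at hcong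
  exact hcong

lemma bij_orbit {f : ℤ_[2] → ℤ_[2]} {m : ℕ} (hf : OneLip f) (htr : TransMod f m)
    (c : ZMod (2^m)) : Function.Bijective fun i : Fin (2^m) => (ind f m)^[(i:ℕ)] c := by
  haveI : NeZero (2^m) := ⟨pow_ne_zero _ two_ne_zero⟩
  refine (Fintype.bijective_iff_surjective_and_card _).2 ⟨surj_orbit hf htr c, by simp⟩

lemma iter_card_fixed {f : ℤ_[2] → ℤ_[2]} {m : ℕ} (hf : OneLip f) (htr : TransMod f m)
    (c : ZMod (2^m)) : (ind f m)^[2^m] c = c := by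
  obtain ⟨i₀, hi₀⟩ := surj_orbit hf htr c ((ind f m)^[2^m] c)
  simp only [] at hi₀
  by_cases h0 : (i₀ : ℕ) = 0
  · rw [h0] at hi₀; exact hi₀.symm
  · exfalso
    have hlt : (i₀ : ℕ) < 2^m := i₀.2
    have hd : (ind f m)^[2^m - i₀] ((ind f m)^[(i₀:ℕ)] c) = (ind f m)^[(i₀:ℕ)] c := by
      rw [← Function.iterate_add_apply, Nat.sub_add_cancel hlt.le, ← hi₀]
    have hinj := (bij_orbit hf htr ((ind f m)^[(i₀:ℕ)] c)).1
    have : (⟨2^m - i₀, Nat.sub_lt (Nat.pos_of_ne_zero (by positivity)) (Nat.pos_of_ne_zero h0)⟩ :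
        Fin (2^m)) = ⟨0, Nat.pos_of_ne_zero (by positivity)⟩ := hinj hd
    have := Fin.mk.injEq .. ▸ this
    omega

lemma iter_fixed_phi {f : ℤ_[2] → ℤ_[2]} {m : ℕ} (hf : OneLip f) (htr : TransMod f m)
    (x : ℤ_[2]) : phi m (f^[2^m] x) = phi m x := by
  rw [ind_iter hf, iter_card_fixed hf htr]

lemma inj_phi {f : ℤ_[2] → ℤ_[2]} {m : ℕ} (hf : OneLip f) (htr : TransMod f m)
    {a b : ℤ_[2]} (h : phi m (f a) = phi m (f b)) : phi m a = phi m b := by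
  have hpos : 0 < 2^m := Nat.pos_of_ne_zero (by positivity)
  have key : ∀ t : ℤ_[2], (ind f m)^[2^m - 1] (ind f m (phi m t)) = phi m t := by
    intro t
    have hsp : (2^m - 1).succ = 2^m := Nat.succ_pred_eq_of_pos hpos
    rw [← Function.iterate_succ_apply, hsp]
    exact iter_card_fixed hf htr _
  rw [ind_spec hf, ind_spec hf] at h
  calc phi m a = (ind f m)^[2^m - 1] (ind f m (phi m a)) := (key a).symm
    _ = (ind f m)^[2^m - 1] (ind f m (phi m b)) := by rw [h]
    _ = phi m b := key b

lemma norm_exact {n : ℕ} {a : ℤ_[2]} (h1 : phi n a = 0) (h2 : phi (n+1) a ≠ 0) :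
    phi (n+1) (a - 2^n) = 0 := by
  have hdvd : (2:ℤ_[2])^n ∣ a := by
    rw [← norm_le_iff_phi] at h1
    have h2' := (PadicInt.norm_le_pow_iff_mem_span_pow a n (p := 2))
    rw [show (((2:ℕ)):ℝ)^(-(n:ℤ)) = ((2:ℝ)^n)⁻¹ by push_cast; rw [zpow_neg, zpow_natCast]] at h2'
    have := h2'.1 h1
    rwa [Ideal.mem_span_singleton] at this
  obtain ⟨b, rfl⟩ := hdvd
  have hbodd : phi 1 b ≠ 0 := by
    intro hb
    apply h2
    rw [← norm_le_iff_phi] at hb ⊢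
    calc ‖(2:ℤ_[2])^n * b‖ = ‖(2:ℤ_[2])^n‖ * ‖b‖ := norm_mul _ _
      _ ≤ ((2:ℝ)^n)⁻¹ * ((2:ℝ)^1)⁻¹ := by
          rw [norm_two_pow]
          exact mul_le_mul_of_nonneg_left hb (by positivity)
      _ = ((2:ℝ)^(n+1))⁻¹ := by rw [← mul_inv, ← pow_add]
  have hb1 : phi 1 (b - 1) = 0 := by
    have hv : (phi 1 b).val = 1 := by
      have := ZMod.val_lt (phi 1 b)
      have hne : (phi 1 b).val ≠ 0 := fun hh => hbodd (by
        rwa [← ZMod.val_eq_zero])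
      omega
    rw [map_sub, map_one, sub_eq_zero, ← ZMod.natCast_zmod_val (phi 1 b), hv, Nat.cast_one]
  rw [← norm_le_iff_phi] at hb1 ⊢
  have : (2:ℤ_[2])^n * b - 2^n = 2^n * (b - 1) := by ring
  rw [this]
  calc ‖(2:ℤ_[2])^n * (b-1)‖ = ‖(2:ℤ_[2])^n‖ * ‖b-1‖ := norm_mul _ _
    _ ≤ ((2:ℝ)^n)⁻¹ * ((2:ℝ)^1)⁻¹ := by
        rw [norm_two_pow]; exact mul_le_mul_of_nonneg_left hb1 (by positivity)
    _ = ((2:ℝ)^(n+1))⁻¹ := by rw [← mul_inv, ← pow_add]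

lemma compat {u : ℤ_[2] → ℤ_[2]} {n : ℕ} (hu : OneLip u) (htr : TransMod u (n+1))
    {a b : ℤ_[2]} (h : phi n (a - b) = 0) :
    phi (n+1) ((u a - u b) - (a - b)) = 0 := by
  by_cases hc : phi (n+1) (a - b) = 0
  · have h1 : phi (n+1) (u a - u b) = 0 := by
      rw [← norm_le_iff_phi] at hc ⊢
      exact le_trans (hu a b) hc
    rw [map_sub, h1, hc, sub_zero]
  · have hd := norm_exact h hc
    have he1 : phi n (u a - u b) = 0 := by
      rw [← norm_le_iff_phi] at h ⊢
      exact le_trans (hu a b) h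
    have he2 : phi (n+1) (u a - u b) ≠ 0 := by
      intro hh
      apply hc
      have := inj_phi hu htr (a := a) (b := b) (by rw [← sub_eq_zero, ← map_sub]; exact hh)
      rw [map_sub, this, sub_self]
    have hne := norm_exact he1 he2
    have : (u a - u b) - (a - b) = ((u a - u b) - 2^n) - ((a - b) - 2^n) := by ring
    rw [this, map_sub, hne, hd, sub_zero]

lemma compat' {u : ℤ_[2] → ℤ_[2]} {n : ℕ} (hu : OneLip u) (htr : TransMod u (n+1))
    {a b : ℤ_[2]} (h : phi n (a - b) = 0) :
    phi (n+1) (u a - a) = phi (n+1) (u b - b) := by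
  have h1 := compat hu htr h
  have h2 : (u a - u b) - (a - b) = (u a - a) - (u b - b) := by ring
  rw [h2, map_sub, sub_eq_zero] at h1
  exact h1

lemma half {u : ℤ_[2] → ℤ_[2]} {n : ℕ} (hu : OneLip u) (h1 : TransMod u n)
    (h2 : TransMod u (n+1)) (z : ℤ_[2]) :
    phi (n+1) (u^[2^n] z - z - 2^n) = 0 := by
  have ha : phi n (u^[2^n] z - z) = 0 := by
    rw [map_sub, iter_fixed_phi hu h1, sub_self]
  have hb : phi (n+1) (u^[2^n] z - z) ≠ 0 := by
    intro hh
    rw [map_sub, sub_eq_zero] at hh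
    rw [ind_iter hu] at hh
    have hbij := (bij_orbit hu h2 (phi (n+1) z)).1
    have hlt : 2^n < 2^(n+1) := Nat.pow_lt_pow_succ (by norm_num)
    have : (⟨2^n, hlt⟩ : Fin (2^(n+1))) = ⟨0, by positivity⟩ := hbij (by
      simpa using hh)
    simp only [Fin.mk.injEq] at this
    exact absurd this (pow_ne_zero n two_ne_zero)
  exact norm_exact ha hb

lemma telescope (f : ℤ_[2] → ℤ_[2]) (N : ℕ) (x : ℤ_[2]) :
    f^[N] x - x = ∑ i ∈ Finset.range N, (f (f^[i] x) - f^[i] x) := by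
  induction N with
  | zero => simp
  | succ k ih =>
      rw [Finset.sum_range_succ, ← ih, Function.iterate_succ_apply']
      ring

lemma vsum {v : ℤ_[2] → ℤ_[2]} (hv : OneLip v) (m : ℕ) :
    ‖∑ k ∈ Finset.range (2^(m+1)), v ((k : ℕ) : ℤ_[2])‖ ≤ ((2:ℝ)^m)⁻¹ := by
  induction m with
  | zero =>
      rw [show (2:ℕ)^1 = 2 by norm_num, Finset.sum_range_succ, Finset.sum_range_one]
      calc ‖v ((0:ℕ):ℤ_[2]) + v ((1:ℕ):ℤ_[2])‖ ≤ max ‖v ((0:ℕ):ℤ_[2])‖ ‖v ((1:ℕ):ℤ_[2])‖ :=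
            PadicInt.nonarchimedean _ _
        _ ≤ ((2:ℝ)^0)⁻¹ := by
            rw [pow_zero, inv_one]
            exact max_le (PadicInt.norm_le_one _) (PadicInt.norm_le_one _)
  | succ m ih =>
      have hsplit : ∑ k ∈ Finset.range (2^(m+2)), v ((k:ℕ):ℤ_[2]) =
          ∑ k ∈ Finset.range (2^(m+1)), v ((k:ℕ):ℤ_[2]) +
          ∑ k ∈ Finset.range (2^(m+1)), v (((2^(m+1) + k : ℕ)):ℤ_[2]) := by
        rw [Finset.range_eq_Ico, ← Finset.sum_Ico_consecutive _ (Nat.zero_le (2^(m+1)))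
          (Nat.pow_le_pow_right (by norm_num) (by omega) : 2^(m+1) ≤ 2^(m+2))]
        congr 1
        · rw [Finset.range_eq_Ico]
        rw [Finset.sum_Ico_eq_sum_range]
        have : 2^(m+2) - 2^(m+1) = 2^(m+1) := by rw [pow_succ 2 (m+1)]; omega
        rw [this, Finset.range_eq_Ico]
      set S1 := ∑ k ∈ Finset.range (2^(m+1)), v ((k:ℕ):ℤ_[2]) with hS1
      set S2 := ∑ k ∈ Finset.range (2^(m+1)), v (((2^(m+1) + k : ℕ)):ℤ_[2]) with hS2
      have hdiff : ‖S2 - S1‖ ≤ ((2:ℝ)^(m+1))⁻¹ := by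
        rw [norm_le_iff_phi, hS1, hS2, ← Finset.sum_sub_distrib, map_sum]
        apply Finset.sum_eq_zero
        intro k _
        rw [← norm_le_iff_phi]
        have : (((2^(m+1) + k : ℕ)):ℤ_[2]) - ((k:ℕ):ℤ_[2]) = (2:ℤ_[2])^(m+1) := by push_cast; ring
        calc ‖v (((2^(m+1) + k : ℕ)):ℤ_[2]) - v ((k:ℕ):ℤ_[2])‖ ≤
            ‖(((2^(m+1) + k : ℕ)):ℤ_[2]) - ((k:ℕ):ℤ_[2])‖ := hv _ _
          _ = ((2:ℝ)^(m+1))⁻¹ := by rw [this, norm_two_pow]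
      have h2S1 : ‖(2:ℤ_[2]) * S1‖ ≤ ((2:ℝ)^(m+1))⁻¹ := by
        rw [norm_mul]
        calc ‖(2:ℤ_[2])‖ * ‖S1‖ ≤ ((2:ℝ)^1)⁻¹ * ((2:ℝ)^m)⁻¹ := by
              apply mul_le_mul (le_of_eq (by rw [← norm_two_pow 1, pow_one])) ih (norm_nonneg _)
              positivity
          _ = ((2:ℝ)^(m+1))⁻¹ := by rw [← mul_inv, ← pow_add]; ring_nf
      rw [hsplit, show S1 + S2 = 2 * S1 + (S2 - S1) by ring]
      calc ‖(2:ℤ_[2]) * S1 + (S2 - S1)‖ ≤ max ‖(2:ℤ_[2]) * S1‖ ‖S2 - S1‖ :=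
            PadicInt.nonarchimedean _ _
        _ ≤ ((2:ℝ)^(m+1))⁻¹ := max_le h2S1 hdiff

lemma orbit_sum {A : Type*} [AddCommMonoid A] {f : ℤ_[2] → ℤ_[2]} {m : ℕ}
    (hf : OneLip f) (htr : TransMod f m) (x : ℤ_[2]) (h : ZMod (2^m) → A) :
    ∑ i ∈ Finset.range (2^m), h (phi m (f^[i] x)) = ∑ c : ZMod (2^m), h c := by
  rw [← Fin.sum_univ_eq_sum_range]
  have hb := bij_orbit hf htr (phi m x)
  calc ∑ i : Fin (2^m), h (phi m (f^[(i:ℕ)] x))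
      = ∑ i : Fin (2^m), h ((ind f m)^[(i:ℕ)] (phi m x)) := by
        apply Finset.sum_congr rfl; intro i _; rw [ind_iter hf]
    _ = ∑ c : ZMod (2^m), h c := Fintype.sum_bijective _ hb _ _ (fun i => rfl)

lemma zmod_val_sum {A : Type*} [AddCommMonoid A] (m : ℕ) (h : ℕ → A) :
    ∑ c : ZMod (2^m), h c.val = ∑ k ∈ Finset.range (2^m), h k := by
  haveI : NeZero (2^m) := ⟨pow_ne_zero _ two_ne_zero⟩
  rw [← Fin.sum_univ_eq_sum_range]
  refine (Fintype.sum_bijective (fun i : Fin (2^m) => ((i : ℕ) : ZMod (2^m))) ⟨?_, ?_⟩ _ _ ?_).symm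
  · intro i j hij
    simp only [] at hij
    have : ((i:ℕ):ZMod (2^m)).val = ((j:ℕ):ZMod (2^m)).val := by rw [hij]
    rw [ZMod.val_cast_of_lt i.2, ZMod.val_cast_of_lt j.2] at this
    exact Fin.ext this
  · intro c
    exact ⟨⟨c.val, ZMod.val_lt c⟩, ZMod.natCast_zmod_val c⟩
  · intro i
    simp [ZMod.val_cast_of_lt i.2]

end PerturbAux

open PerturbAux in
/-- Perturbing a transitive T-function uniformly differentiable modulo 4 by `4 v(x)`
keeps the derivative modulo 4 and preserves transitivity. -/
theorem perturbation_preserves (u g v : ℤ_[2] → ℤ_[2]) (K : ℕ)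
    (hu : OneLip u) (hut : TransitiveT u) (hg : IsDerivMod u g 2 K)
    (hv : OneLip v) (f : ℤ_[2] → ℤ_[2]) (hfdef : ∀ x : ℤ_[2], f x = u x + 4 * v x) :
    IsDerivMod f g 2 K ∧ TransitiveT f := by
  have norm4 : ‖(4:ℤ_[2])‖ = ((2:ℝ)^2)⁻¹ := by
    rw [show (4:ℤ_[2]) = 2^2 by norm_num, norm_two_pow]
  -- f is 1-Lipschitz
  have hf : OneLip f := by
    intro a b
    have hsplit : f a - f b = (u a - u b) + 4 * (v a - v b) := by rw [hfdef, hfdef]; ring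
    rw [hsplit]
    refine le_trans (PadicInt.nonarchimedean _ _) (max_le (hu a b) ?_)
    rw [norm_mul, norm4]
    calc ((2:ℝ)^2)⁻¹ * ‖v a - v b‖ ≤ 1 * ‖a - b‖ := by
          apply mul_le_mul (by norm_num) (hv a b) (norm_nonneg _) (by norm_num)
      _ = ‖a - b‖ := one_mul _
  constructor
  · -- derivative part
    intro x h hh
    have hsplit : f (x + h) - f x - g x * h =
        (u (x + h) - u x - g x * h) + 4 * (v (x + h) - v x) := by
      rw [hfdef, hfdef]; ring
    rw [hsplit]
    refine le_trans (PadicInt.nonarchimedean _ _) (max_le (hg x h hh) ?_)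
    rw [norm_mul, norm4]
    apply mul_le_mul_of_nonneg_left _ (by positivity)
    calc ‖v (x + h) - v x‖ ≤ ‖(x + h) - x‖ := hv _ _
      _ = ‖h‖ := by rw [add_sub_cancel_left]
  · -- transitivity
    -- closeness of iterates mod 4
    have hclose : ∀ (i : ℕ) (x : ℤ_[2]), ‖f^[i] x - u^[i] x‖ ≤ ((2:ℝ)^2)⁻¹ := by
      intro i
      induction i with
      | zero => intro x; simp
      | succ k ih =>
          intro x
          rw [Function.iterate_succ_apply', Function.iterate_succ_apply']
          have hsplit : f (f^[k] x) - u (u^[k] x) =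
              (u (f^[k] x) - u (u^[k] x)) + 4 * v (f^[k] x) := by rw [hfdef]; ring
          rw [hsplit]
          refine le_trans (PadicInt.nonarchimedean _ _) (max_le ?_ ?_)
          · exact le_trans (hu _ _) (ih x)
          · rw [norm_mul, norm4]
            calc ((2:ℝ)^2)⁻¹ * ‖v (f^[k] x)‖ ≤ ((2:ℝ)^2)⁻¹ * 1 :=
                  mul_le_mul_of_nonneg_left (PadicInt.norm_le_one _) (by positivity)
              _ = ((2:ℝ)^2)⁻¹ := mul_one _
    -- base case
    have hbase : TransMod f 1 := by
      intro x y
      obtain ⟨i, hi, hc⟩ := hut 1 le_rfl x y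
      refine ⟨i, hi, ?_⟩
      have : f^[i] x - y = (f^[i] x - u^[i] x) + (u^[i] x - y) := by ring
      rw [CongMod, this]
      refine le_trans (PadicInt.nonarchimedean _ _) (max_le ?_ hc)
      exact le_trans (hclose i x) (by norm_num)
    -- inductive step
    have hstep : ∀ n : ℕ, 1 ≤ n → TransMod f n → TransMod f (n+1) := by
      intro n hn hfn
      obtain ⟨m, rfl⟩ : ∃ m, n = m + 1 := ⟨n - 1, by omega⟩
      set n := m + 1
      have hun : TransMod u n := hut n (by omega)
      have hun1 : TransMod u (n+1) := hut (n+1) (by omega)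
      -- the key congruence : f^[2^n] x ≡ x + 2^n  (mod 2^(n+1))
      have key : ∀ x : ℤ_[2], phi (n+1) (f^[2^n] x - (x + 2^n)) = 0 := by
        intro x
        have hψt : ∀ t : ℤ_[2],
            phi (n+1) (u ((((phi n t).val : ℕ)):ℤ_[2]) - ((((phi n t).val : ℕ)):ℤ_[2]))
              = phi (n+1) (u t - t) := by
          intro t
          exact compat' hu hun1 (by rw [map_sub, phi_val, sub_self])
        -- Term B : the v-sum is small
        have hvB : phi (n+1) (4 * ∑ i ∈ Finset.range (2^n), v (f^[i] x)) = 0 := by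
          set B := ∑ i ∈ Finset.range (2^n), v (f^[i] x) with hB
          set C := ∑ k ∈ Finset.range (2^n), v ((k:ℕ):ℤ_[2]) with hC
          have hBC : phi n (B - C) = 0 := by
            rw [map_sub, sub_eq_zero, hB, hC, map_sum, map_sum]
            have h1 : ∀ i ∈ Finset.range (2^n), phi n (v (f^[i] x)) =
                (fun c : ZMod (2^n) => phi n (v ((c.val : ℕ):ℤ_[2]))) (phi n (f^[i] x)) := by
              intro i _
              exact lip_phi hv n (phi_val n (phi n (f^[i] x))).symm
            rw [Finset.sum_congr rfl h1,
              orbit_sum hf hfn x (fun c : ZMod (2^n) => phi n (v ((c.val : ℕ):ℤ_[2]))),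
              zmod_val_sum n (fun k => phi n (v ((k:ℕ):ℤ_[2])))]
          have hCn : ‖C‖ ≤ ((2:ℝ)^m)⁻¹ := vsum hv m
          have hBn : ‖B‖ ≤ ((2:ℝ)^m)⁻¹ := by
            rw [show B = (B - C) + C by ring]
            refine le_trans (PadicInt.nonarchimedean _ _) (max_le ?_ hCn)
            rw [← norm_le_iff_phi] at hBC
            refine le_trans hBC ?_
            apply inv_anti₀ (by positivity)
            exact pow_le_pow_right₀ (by norm_num) (by omega)
          rw [← norm_le_iff_phi, norm_mul, norm4]
          calc ((2:ℝ)^2)⁻¹ * ‖B‖ ≤ ((2:ℝ)^2)⁻¹ * ((2:ℝ)^m)⁻¹ :=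
                mul_le_mul_of_nonneg_left hBn (by positivity)
            _ = ((2:ℝ)^(n+1))⁻¹ := by rw [← mul_inv, ← pow_add]; norm_num; ring_nf; omega
        -- Term A : the u-sum along the f-orbit equals the u-sum along the u-orbit
        have hA : ∑ i ∈ Finset.range (2^n), phi (n+1) (u (f^[i] x) - f^[i] x)
            = phi (n+1) ((2:ℤ_[2])^n) := by
          have hAf : ∀ (w : ℤ_[2] → ℤ_[2]), OneLip w → TransMod w n →
              ∑ i ∈ Finset.range (2^n), phi (n+1) (u (w^[i] x) - w^[i] x)
                = ∑ c : ZMod (2^n),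
                    phi (n+1) (u ((c.val : ℕ):ℤ_[2]) - ((c.val : ℕ):ℤ_[2])) := by
            intro w hw hwn
            have h1 : ∀ i ∈ Finset.range (2^n), phi (n+1) (u (w^[i] x) - w^[i] x) =
                (fun c : ZMod (2^n) =>
                  phi (n+1) (u ((c.val : ℕ):ℤ_[2]) - ((c.val : ℕ):ℤ_[2]))) (phi n (w^[i] x)) := by
              intro i _
              exact (hψt (w^[i] x)).symm
            rw [Finset.sum_congr rfl h1]
            exact orbit_sum hw hwn x
              (fun c : ZMod (2^n) => phi (n+1) (u ((c.val : ℕ):ℤ_[2]) - ((c.val : ℕ):ℤ_[2])))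
          have h2 : ∑ i ∈ Finset.range (2^n), phi (n+1) (u (u^[i] x) - u^[i] x)
              = phi (n+1) ((2:ℤ_[2])^n) := by
            rw [← map_sum, ← telescope u (2^n) x]
            have := half hu hun hun1 x
            rw [map_sub, sub_eq_zero] at this
            exact this
          rw [hAf f hf hfn, ← hAf u hu hun, h2]
        -- combine
        have hmain : phi (n+1) (f^[2^n] x - x) = phi (n+1) ((2:ℤ_[2])^n) := by
          rw [telescope f (2^n) x, map_sum]
          have h1 : ∀ i ∈ Finset.range (2^n), phi (n+1) (f (f^[i] x) - f^[i] x) =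
              phi (n+1) (u (f^[i] x) - f^[i] x) + phi (n+1) (4 * v (f^[i] x)) := by
            intro i _
            rw [← map_add]
            congr 1
            rw [hfdef]; ring
          rw [Finset.sum_congr rfl h1, Finset.sum_add_distrib, hA, ← map_sum, ← Finset.mul_sum,
            hvB, add_zero]
        have : f^[2^n] x - (x + 2^n) = (f^[2^n] x - x) - 2^n := by ring
        rw [this, map_sub, hmain, sub_self]
      -- conclude transitivity mod 2^(n+1)
      intro x y
      obtain ⟨i, hi, hc⟩ := hfn x y
      rw [cong_iff_phi] at hc
      by_cases hcc : phi (n+1) (f^[i] x - y) = 0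
      · refine ⟨i, ?_, ?_⟩
        · have : (2:ℕ)^n < 2^(n+1) := Nat.pow_lt_pow_succ (by norm_num)
          omega
        · rw [cong_iff_phi, ← sub_eq_zero, ← map_sub]
          exact hcc
      · refine ⟨2^n + i, ?_, ?_⟩
        · have : (2:ℕ)^(n+1) = 2^n + 2^n := by rw [pow_succ]; omega
          omega
        · rw [cong_iff_phi, ← sub_eq_zero, ← map_sub, Function.iterate_add_apply]
          set w := f^[i] x with hw
          have hn0 : phi n (w - y) = 0 := by
            rw [map_sub, sub_eq_zero]; exact hc
          have hNE : phi (n+1) (w - y - 2^n) = 0 := norm_exact hn0 hcc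
          have hkey := key w
          have h2n1 : phi (n+1) ((2:ℤ_[2])^(n+1)) = 0 := by
            rw [← norm_le_iff_phi, norm_two_pow]
          have hdecomp : f^[2^n] w - y =
              (f^[2^n] w - (w + 2^n)) + (w - y - 2^n) + 2^(n+1) := by ring
          rw [hdecomp, map_add, map_add, hkey, hNE, h2n1, add_zero, add_zero]
    -- assemble
    intro n hn
    induction n, hn using Nat.le_induction with
    | base => exact hbase
    | succ n hn ih => exact hstep n hn ih
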